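/- arXiv:2403.18284 — 2 statements merged into one kernel-verified Lean document; each statement's English description precedes it below -/
import Mathlib

section
/- Suppose Assumption 1 holds. Then for every U⁰ ∈ F, the level set L := { U ∈ F : g(U) ≥ g(U⁰) } is a bounded subset of ℝ^m × S^n × S^n. -/
open Matrix

noncomputable section

/-- Frobenius norm of a matrix. -/
def frobNorm {k : ℕ} (X : Matrix (Fin k) (Fin k) ℝ) : ℝ :=
  Real.sqrt (∑ i, ∑ j, X i j ^ 2)

/-- The trace inner product `A • B = Σ_{i,j} A_{ij} B_{ij}`. -/
def minner {k : ℕ} (A B : Matrix (Fin k) (Fin k) ℝ) : ℝ := ∑ i, ∑ j, A i j * B i j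

/-- The linear map `Q : S^n → S^{n̄}`, `[Q(X)]_{ab} = X_{K*(a)} − X_{K*(b)}` for `a < b`,
extended symmetrically with zero diagonal, where `K* = e` enumerates the strictly
upper-triangular positions. -/
def Qmap {n : ℕ} (e : Fin (n * (n - 1) / 2) ≃ {p : Fin n × Fin n // p.1 < p.2})
    (X : Matrix (Fin n) (Fin n) ℝ) :
    Matrix (Fin (n * (n - 1) / 2)) (Fin (n * (n - 1) / 2)) ℝ :=
  fun a b =>
    if a < b then X (e a).1.1 (e a).1.2 - X (e b).1.1 (e b).1.2
    else if b < a then X (e b).1.1 (e b).1.2 - X (e a).1.1 (e a).1.2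
    else 0

/-- The adjoint `Qᵀ : S^{n̄} → S^n`:
`[Qᵀ(Z)]_{ij} = Σ_{l > K(i,j)} Z_{K(i,j),l} − Σ_{l < K(i,j)} Z_{l,K(i,j)}` for `i < j`,
extended symmetrically with zero diagonal. -/
def QTmap {n : ℕ} (e : Fin (n * (n - 1) / 2) ≃ {p : Fin n × Fin n // p.1 < p.2})
    (Z : Matrix (Fin (n * (n - 1) / 2)) (Fin (n * (n - 1) / 2)) ℝ) :
    Matrix (Fin n) (Fin n) ℝ :=
  fun i j =>
    if h : i < j then
      (∑ l, if e.symm ⟨(i, j), h⟩ < l then Z (e.symm ⟨(i, j), h⟩) l else 0)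
        - ∑ l, if l < e.symm ⟨(i, j), h⟩ then Z l (e.symm ⟨(i, j), h⟩) else 0
    else if h' : j < i then
      (∑ l, if e.symm ⟨(j, i), h'⟩ < l then Z (e.symm ⟨(j, i), h'⟩) l else 0)
        - ∑ l, if l < e.symm ⟨(j, i), h'⟩ then Z l (e.symm ⟨(j, i), h'⟩) else 0
    else 0

/-- The set `𝒮 = {S ∈ S^n : S = Qᵀ(Z), ‖Z‖_∞ ≤ λ}`. -/
def Sset {n : ℕ} (lam : ℝ) (e : Fin (n * (n - 1) / 2) ≃ {p : Fin n × Fin n // p.1 < p.2}) :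
    Set (Matrix (Fin n) (Fin n) ℝ) :=
  {S | ∃ Z : Matrix (Fin (n * (n - 1) / 2)) (Fin (n * (n - 1) / 2)) ℝ,
    Z.IsSymm ∧ (∀ a b, |Z a b| ≤ lam) ∧ S = QTmap e Z}

/-- Euclidean norm on `ℝ^m`. -/
def eunorm {k : ℕ} (y : Fin k → ℝ) : ℝ := Real.sqrt (∑ i, y i ^ 2)

/-- The set `𝒲 = {W ∈ S^n : ‖W‖_∞ ≤ ρ}`. -/
def Wset {n : ℕ} (ρ : ℝ) : Set (Matrix (Fin n) (Fin n) ℝ) :=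
  {W | W.IsSymm ∧ ∀ i j, |W i j| ≤ ρ}

/-- The linear map `𝒜(X) = (A_1 • X, …, A_m • X)`. -/
def AAmap {n m : ℕ} (A : Fin m → Matrix (Fin n) (Fin n) ℝ)
    (X : Matrix (Fin n) (Fin n) ℝ) : Fin m → ℝ := fun i => minner (A i) X

/-- The adjoint `𝒜ᵀ(y) = Σ_i y_i A_i`. -/
def ATmap {n m : ℕ} (A : Fin m → Matrix (Fin n) (Fin n) ℝ) (y : Fin m → ℝ) :
    Matrix (Fin n) (Fin n) ℝ := ∑ i, y i • A i

/-- `B(U) = −𝒜ᵀ(y) + W/2 + S` for `U = (y, W, S)`. -/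
def Bmap {n m : ℕ} (A : Fin m → Matrix (Fin n) (Fin n) ℝ)
    (U : (Fin m → ℝ) × Matrix (Fin n) (Fin n) ℝ × Matrix (Fin n) (Fin n) ℝ) :
    Matrix (Fin n) (Fin n) ℝ :=
  -(ATmap A U.1) + (1 / 2 : ℝ) • U.2.1 + U.2.2

/-- The dual objective `g(U) = bᵀy + μ log det(C + B(U)) + nμ − nμ log μ`. -/
def gfun {n m : ℕ} (A : Fin m → Matrix (Fin n) (Fin n) ℝ) (b : Fin m → ℝ)
    (C : Matrix (Fin n) (Fin n) ℝ) (μ : ℝ)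
    (U : (Fin m → ℝ) × Matrix (Fin n) (Fin n) ℝ × Matrix (Fin n) (Fin n) ℝ) : ℝ :=
  (∑ i, b i * U.1 i) + μ * Real.log (C + Bmap A U).det
    + (n : ℝ) * μ - (n : ℝ) * μ * Real.log μ

/-- `X(U) = μ (C + B(U))⁻¹`. -/
def XofU {n m : ℕ} (A : Fin m → Matrix (Fin n) (Fin n) ℝ)
    (C : Matrix (Fin n) (Fin n) ℝ) (μ : ℝ)
    (U : (Fin m → ℝ) × Matrix (Fin n) (Fin n) ℝ × Matrix (Fin n) (Fin n) ℝ) :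
    Matrix (Fin n) (Fin n) ℝ := μ • (C + Bmap A U)⁻¹

/-- The set `M = ℝ^m × 𝒲 × 𝒮`. -/
def Mset {n : ℕ} (m : ℕ) (ρ lam : ℝ)
    (e : Fin (n * (n - 1) / 2) ≃ {p : Fin n × Fin n // p.1 < p.2}) :
    Set ((Fin m → ℝ) × Matrix (Fin n) (Fin n) ℝ × Matrix (Fin n) (Fin n) ℝ) :=
  {U | U.2.1 ∈ Wset ρ ∧ U.2.2 ∈ Sset lam e}

/-- The set `N = {U : C + B(U) ≻ 0}`. -/
def Nset {n m : ℕ} (A : Fin m → Matrix (Fin n) (Fin n) ℝ)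
    (C : Matrix (Fin n) (Fin n) ℝ) :
    Set ((Fin m → ℝ) × Matrix (Fin n) (Fin n) ℝ × Matrix (Fin n) (Fin n) ℝ) :=
  {U | (C + Bmap A U).PosDef}

/-- The feasible set `F = M ∩ N`. -/
def Fset {n m : ℕ} (ρ lam : ℝ)
    (e : Fin (n * (n - 1) / 2) ≃ {p : Fin n × Fin n // p.1 < p.2})
    (A : Fin m → Matrix (Fin n) (Fin n) ℝ) (C : Matrix (Fin n) (Fin n) ℝ) :
    Set ((Fin m → ℝ) × Matrix (Fin n) (Fin n) ℝ × Matrix (Fin n) (Fin n) ℝ) :=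
  Mset m ρ lam e ∩ Nset A C

/-- The norm `‖U‖ = √(‖y‖² + ‖W‖_F² + ‖S‖_F²)` on `ℝ^m × S^n × S^n`. -/
def normU {n m : ℕ}
    (U : (Fin m → ℝ) × Matrix (Fin n) (Fin n) ℝ × Matrix (Fin n) (Fin n) ℝ) : ℝ :=
  Real.sqrt (eunorm U.1 ^ 2 + frobNorm U.2.1 ^ 2 + frobNorm U.2.2 ^ 2)


/-! ### Auxiliary lemmas -/

lemma sum_comm3 {α : Type*} [AddCommMonoid α] {a b c : ℕ} (g : Fin a → Fin b → Fin c → α) :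
    ∑ x, ∑ y, ∑ z, g x y z = ∑ z, ∑ x, ∑ y, g x y z :=
  (Finset.sum_congr rfl (fun _ _ => Finset.sum_comm)).trans Finset.sum_comm

lemma quad_lower {k : ℕ} {X : Matrix (Fin k) (Fin k) ℝ} (hk : 0 < k) (hX : X.PosDef) :
    ∃ δ > 0, ∀ x : Fin k → ℝ, δ * (x ⬝ᵥ x) ≤ x ⬝ᵥ X *ᵥ x := by
  have hH := hX.isHermitian
  haveI : Nonempty (Fin k) := ⟨⟨0, hk⟩⟩
  set δ := Finset.univ.inf' Finset.univ_nonempty hH.eigenvalues with hδdef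
  have hδpos : 0 < δ := by
    obtain ⟨i, _, hi⟩ := Finset.exists_mem_eq_inf' Finset.univ_nonempty hH.eigenvalues
    rw [hδdef, hi]; exact hX.eigenvalues_pos i
  refine ⟨δ, hδpos, ?_⟩
  intro x
  set V := (hH.eigenvectorUnitary : Matrix (Fin k) (Fin k) ℝ) with hV
  have hVs' : V * star V = 1 := (Unitary.mem_iff.mp hH.eigenvectorUnitary.2).2
  set w := star V *ᵥ x with hw
  have hdot : ∀ (M : Matrix (Fin k) (Fin k) ℝ) z, x ⬝ᵥ (M *ᵥ z) = (star M *ᵥ x) ⬝ᵥ z := by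
    intro M z
    rw [Matrix.dotProduct_mulVec]
    congr 1
    ext j
    simp [Matrix.vecMul, Matrix.mulVec, dotProduct, Matrix.conjTranspose_apply, mul_comm]
  have hxx : x ⬝ᵥ x = w ⬝ᵥ w := by
    rw [hw, ← hdot, Matrix.mulVec_mulVec, hVs', Matrix.one_mulVec]
  have hquad : x ⬝ᵥ X *ᵥ x = ∑ i, hH.eigenvalues i * (w i)^2 := by
    conv_lhs => rw [hH.spectral_theorem, Unitary.conjStarAlgAut_apply]
    rw [show (V * Matrix.diagonal (RCLike.ofReal ∘ hH.eigenvalues) * star V) *ᵥ x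
        = V *ᵥ (Matrix.diagonal (RCLike.ofReal ∘ hH.eigenvalues) *ᵥ w) by
      rw [hw, Matrix.mulVec_mulVec, Matrix.mulVec_mulVec]]
    rw [hdot, ← hw]
    simp [dotProduct, Matrix.mulVec_diagonal, pow_two]
    ring_nf
    exact Finset.sum_congr rfl (fun i _ => by ring)
  rw [hquad, hxx]
  have hws : δ * (w ⬝ᵥ w) = ∑ i, δ * (w i)^2 := by
    simp [dotProduct, Finset.mul_sum, pow_two]
  rw [hws]
  exact Finset.sum_le_sum fun i _ =>
    mul_le_mul_of_nonneg_right (Finset.inf'_le _ (Finset.mem_univ i)) (sq_nonneg _)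

lemma psd_diag_nonneg {k : ℕ} {P : Matrix (Fin k) (Fin k) ℝ} (hP : P.PosSemidef) (i : Fin k) :
    0 ≤ P i i := by
  have := hP.dotProduct_mulVec_nonneg (Pi.single i 1)
  simpa [Matrix.mulVec_single, single_dotProduct] using this

lemma psd_entry_le_trace {k : ℕ} {P : Matrix (Fin k) (Fin k) ℝ} (hP : P.PosSemidef)
    (i j : Fin k) : |P i j| ≤ P.trace := by
  have hdiag : ∀ l, 0 ≤ P l l := psd_diag_nonneg hP
  have hdle : ∀ l : Fin k, P l l ≤ P.trace := by
    intro l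
    exact Finset.single_le_sum (fun l _ => hdiag l) (Finset.mem_univ l)
  have hsym : P j i = P i j := by
    have := hP.1
    calc P j i = Pᵀ i j := rfl
      _ = P i j := by rw [← Matrix.conjTranspose_eq_transpose_of_trivial, this]
  have key : ∀ c : ℝ, 0 ≤ P i i + c * (P i j + P j i) + c^2 * P j j := by
    intro c
    have h := hP.dotProduct_mulVec_nonneg (Pi.single i 1 + Pi.single j c)
    rw [Matrix.mulVec_add, Matrix.mulVec_single, Matrix.mulVec_single] at h
    simp only [star_trivial, dotProduct_add, add_dotProduct, single_dotProduct,
      Pi.smul_apply, Matrix.col_apply, op_smul_eq_mul] at h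
    nlinarith [h]
  rcases le_or_gt 0 (P i j) with h0 | h0
  · rw [abs_of_nonneg h0]
    have := key (-1)
    nlinarith [hdle i, hdle j, hdiag i, hdiag j]
  · rw [abs_of_neg h0]
    have := key 1
    rw [hsym] at this
    nlinarith [hdle i, hdle j, hdiag i, hdiag j]

lemma trace_quad {k : ℕ} {X P : Matrix (Fin k) (Fin k) ℝ} (hP : P.PosSemidef) {δ : ℝ}
    (hq : ∀ x : Fin k → ℝ, δ * (x ⬝ᵥ x) ≤ x ⬝ᵥ X *ᵥ x) :
    δ * P.trace ≤ (X * P).trace := by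
  open MatrixOrder in obtain ⟨B, rfl⟩ := CStarAlgebra.nonneg_iff_eq_star_mul_self.mp hP.nonneg
  rw [Matrix.star_eq_conjTranspose]
  have h1 : (X * (Bᴴ * B)).trace = ∑ i, ((fun j => B i j) ⬝ᵥ X *ᵥ (fun j => B i j)) := by
    rw [← Matrix.mul_assoc, Matrix.trace_mul_cycle]
    simp only [Matrix.trace, Matrix.mul_apply, Matrix.diag, dotProduct, Matrix.mulVec,
      conjTranspose_apply, star_trivial, Finset.sum_mul, Finset.mul_sum]
    refine Finset.sum_congr rfl fun i _ => ?_
    rw [Finset.sum_comm]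
    exact Finset.sum_congr rfl fun a _ => Finset.sum_congr rfl fun b _ => by ring
  have h2 : (Bᴴ * B).trace = ∑ i, ((fun j => B i j) ⬝ᵥ (fun j => B i j)) := by
    simp only [Matrix.trace, Matrix.mul_apply, Matrix.diag, dotProduct, conjTranspose_apply,
      star_trivial]
    rw [Finset.sum_comm]
  rw [h1, h2, Finset.mul_sum]
  exact Finset.sum_le_sum fun i _ => hq _

lemma minner_eq_trace {k : ℕ} {X P : Matrix (Fin k) (Fin k) ℝ} (hP : P.IsSymm) :
    minner X P = (X * P).trace := by
  simp only [minner, Matrix.trace, Matrix.diag, Matrix.mul_apply]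
  refine Finset.sum_congr rfl fun i _ => Finset.sum_congr rfl fun j _ => ?_
  rw [hP.apply i j]

lemma minner_add_right {k : ℕ} (X M N : Matrix (Fin k) (Fin k) ℝ) :
    minner X (M + N) = minner X M + minner X N := by
  simp [minner, Matrix.add_apply, mul_add, Finset.sum_add_distrib]

lemma minner_sub_right {k : ℕ} (X M N : Matrix (Fin k) (Fin k) ℝ) :
    minner X (M - N) = minner X M - minner X N := by
  simp [minner, Matrix.sub_apply, mul_sub, Finset.sum_sub_distrib]

lemma minner_smul_right {k : ℕ} (c : ℝ) (X M : Matrix (Fin k) (Fin k) ℝ) :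
    minner X (c • M) = c * minner X M := by
  simp [minner, Matrix.smul_apply, Finset.mul_sum]
  ring_nf
  exact Finset.sum_congr rfl fun i _ => Finset.sum_congr rfl fun j _ => by ring

lemma minner_abs_bound {k : ℕ} {X M : Matrix (Fin k) (Fin k) ℝ} {c : ℝ}
    (h : ∀ i j, |M i j| ≤ c) : |minner X M| ≤ c * ∑ i, ∑ j, |X i j| := by
  calc |minner X M| ≤ ∑ i, ∑ j, |X i j * M i j| := by
        refine (Finset.abs_sum_le_sum_abs _ _).trans ?_
        exact Finset.sum_le_sum fun i _ => Finset.abs_sum_le_sum_abs _ _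
    _ ≤ ∑ i, ∑ j, |X i j| * c := by
        refine Finset.sum_le_sum fun i _ => Finset.sum_le_sum fun j _ => ?_
        rw [abs_mul]
        exact mul_le_mul_of_nonneg_left (h i j) (abs_nonneg _)
    _ = c * ∑ i, ∑ j, |X i j| := by
        rw [Finset.mul_sum]
        exact Finset.sum_congr rfl fun i _ => by
          rw [Finset.mul_sum]
          exact Finset.sum_congr rfl fun j _ => by ring

lemma log_lin_bound {t ε : ℝ} (ht : 0 < t) (hε : 0 < ε) :
    Real.log t ≤ ε * t - 1 - Real.log ε := by
  have := Real.log_le_sub_one_of_pos (mul_pos hε ht)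
  rw [Real.log_mul hε.ne' ht.ne'] at this
  linarith

lemma det_le_trace_pow {k : ℕ} {P : Matrix (Fin k) (Fin k) ℝ} (hP : P.PosDef) :
    P.det ≤ P.trace ^ k := by
  have hH := hP.isHermitian
  have htr : P.trace = ∑ i, hH.eigenvalues i := by
    conv_lhs => rw [hH.spectral_theorem, Unitary.conjStarAlgAut_apply]
    rw [Matrix.trace_mul_cycle]
    simp [Matrix.trace_diagonal]
  have hdet : P.det = ∏ i, hH.eigenvalues i := by
    simpa using hH.det_eq_prod_eigenvalues
  rw [hdet]
  have hle : ∀ i : Fin k, hH.eigenvalues i ≤ P.trace := by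
    intro i
    rw [htr]
    exact Finset.single_le_sum (fun l _ => (hP.eigenvalues_pos l).le) (Finset.mem_univ i)
  calc ∏ i, hH.eigenvalues i ≤ ∏ _i : Fin k, P.trace :=
        Finset.prod_le_prod (fun i _ => (hP.eigenvalues_pos i).le) (fun i _ => hle i)
    _ = P.trace ^ k := by simp [Finset.prod_const]

lemma trace_pos {k : ℕ} (hk : 0 < k) {P : Matrix (Fin k) (Fin k) ℝ} (hP : P.PosDef) :
    0 < P.trace := by
  have hH := hP.isHermitian
  have htr : P.trace = ∑ i, hH.eigenvalues i := by
    conv_lhs => rw [hH.spectral_theorem, Unitary.conjStarAlgAut_apply]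
    rw [Matrix.trace_mul_cycle]
    simp [Matrix.trace_diagonal]
  rw [htr]
  haveI : Nonempty (Fin k) := ⟨⟨0, hk⟩⟩
  exact Finset.sum_pos (fun i _ => hP.eigenvalues_pos i) Finset.univ_nonempty

lemma QT_symm {n : ℕ} (e : Fin (n * (n - 1) / 2) ≃ {p : Fin n × Fin n // p.1 < p.2})
    (Z : Matrix (Fin (n * (n - 1) / 2)) (Fin (n * (n - 1) / 2)) ℝ) :
    (QTmap e Z).IsSymm := by
  unfold Matrix.IsSymm
  ext i j
  rw [Matrix.transpose_apply]
  unfold QTmap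
  rcases lt_trichotomy i j with h | h | h
  · rw [dif_neg (asymm h), dif_pos h, dif_pos h]
  · subst h; rfl
  · rw [dif_pos h, dif_neg (asymm h), dif_pos h]

lemma QT_bound {n : ℕ} (e : Fin (n * (n - 1) / 2) ≃ {p : Fin n × Fin n // p.1 < p.2})
    {Z : Matrix (Fin (n * (n - 1) / 2)) (Fin (n * (n - 1) / 2)) ℝ} {lam : ℝ} (hlam : 0 ≤ lam)
    (hZ : ∀ a b, |Z a b| ≤ lam) (i j : Fin n) :
    |QTmap e Z i j| ≤ 2 * (n * (n - 1) / 2 : ℕ) * lam := by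
  have key : ∀ (a : Fin (n * (n - 1) / 2)),
      |(∑ l, if a < l then Z a l else 0) - ∑ l, if l < a then Z l a else 0|
      ≤ 2 * (n * (n - 1) / 2 : ℕ) * lam := by
    intro a
    have h1 : |∑ l, if a < l then Z a l else 0| ≤ (n * (n - 1) / 2 : ℕ) * lam := by
      refine (Finset.abs_sum_le_sum_abs _ _).trans ?_
      calc ∑ l, |if a < l then Z a l else 0| ≤ ∑ _l : Fin (n * (n - 1) / 2), lam := by
            refine Finset.sum_le_sum fun l _ => ?_
            split
            · exact hZ a l
            · simpa using hlam
        _ = (n * (n - 1) / 2 : ℕ) * lam := by simp [mul_comm]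
    have h2 : |∑ l, if l < a then Z l a else 0| ≤ (n * (n - 1) / 2 : ℕ) * lam := by
      refine (Finset.abs_sum_le_sum_abs _ _).trans ?_
      calc ∑ l, |if l < a then Z l a else 0| ≤ ∑ _l : Fin (n * (n - 1) / 2), lam := by
            refine Finset.sum_le_sum fun l _ => ?_
            split
            · exact hZ l a
            · simpa using hlam
        _ = (n * (n - 1) / 2 : ℕ) * lam := by simp [mul_comm]
    calc |(∑ l, if a < l then Z a l else 0) - ∑ l, if l < a then Z l a else 0|
        ≤ |∑ l, if a < l then Z a l else 0| + |∑ l, if l < a then Z l a else 0| := abs_sub _ _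
      _ ≤ (n * (n - 1) / 2 : ℕ) * lam + (n * (n - 1) / 2 : ℕ) * lam := add_le_add h1 h2
      _ = 2 * (n * (n - 1) / 2 : ℕ) * lam := by ring
  unfold QTmap
  split_ifs with h h'
  · exact key _
  · exact key _
  · simp only [abs_zero]
    positivity

lemma bty_eq {n m : ℕ} (A : Fin m → Matrix (Fin n) (Fin n) ℝ)
    (Xhat : Matrix (Fin n) (Fin n) ℝ) (y : Fin m → ℝ) :
    ∑ i, (AAmap A Xhat) i * y i = minner Xhat (ATmap A y) := by
  simp only [AAmap, minner, ATmap, Matrix.sum_apply, Matrix.smul_apply,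
    smul_eq_mul, Finset.sum_mul, Finset.mul_sum]
  rw [sum_comm3 (fun j k i => Xhat j k * (y i * A i j k))]
  exact Finset.sum_congr rfl fun i _ => Finset.sum_congr rfl fun j _ =>
    Finset.sum_congr rfl fun k _ => by ring

lemma minner_AT {n m : ℕ} (A : Fin m → Matrix (Fin n) (Fin n) ℝ)
    (X : Matrix (Fin n) (Fin n) ℝ) (y : Fin m → ℝ) :
    minner (ATmap A y) X = ∑ i, y i * minner (A i) X := by
  simp only [minner, ATmap, Matrix.sum_apply, Matrix.smul_apply,
    smul_eq_mul, Finset.sum_mul, Finset.mul_sum]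
  rw [sum_comm3]
  exact Finset.sum_congr rfl fun i _ => Finset.sum_congr rfl fun j _ =>
    Finset.sum_congr rfl fun k _ => by ring

lemma y_bound {n m : ℕ} (A : Fin m → Matrix (Fin n) (Fin n) ℝ)
    (hsurj : ∀ v : Fin m → ℝ, ∃ X : Matrix (Fin n) (Fin n) ℝ, X.IsSymm ∧ AAmap A X = v) :
    ∃ c : ℝ, 0 ≤ c ∧ ∀ (y : Fin m → ℝ) (K : ℝ), 0 ≤ K →
      (∀ p q, |ATmap A y p q| ≤ K) → ∀ j, |y j| ≤ c * K := by
  let T : (Fin m → ℝ) →ₗ[ℝ] Matrix (Fin n) (Fin n) ℝ :=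
    { toFun := ATmap A
      map_add' := fun y z => by
        simp [ATmap, add_smul, Finset.sum_add_distrib]
      map_smul' := fun c y => by
        simp [ATmap, smul_smul, Finset.smul_sum] }
  have hker : LinearMap.ker T = ⊥ := by
    rw [LinearMap.ker_eq_bot']
    intro y hy
    obtain ⟨X, _, hX⟩ := hsurj y
    have h0 : minner (ATmap A y) X = 0 := by
      have : ATmap A y = 0 := hy
      rw [this]
      simp [minner]
    rw [minner_AT] at h0
    have h0' : ∑ i, y i * y i = 0 := by
      rw [← h0]
      refine Finset.sum_congr rfl fun i _ => ?_
      have : minner (A i) X = y i := congrFun hX i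
      rw [this]
    funext j
    have := (Finset.sum_eq_zero_iff_of_nonneg
      (fun i (_ : i ∈ Finset.univ) => mul_self_nonneg (y i))).mp h0' j (Finset.mem_univ j)
    have := mul_self_eq_zero.mp this
    simpa using this
  obtain ⟨L, hL⟩ := T.exists_leftInverse_of_injective hker
  set c := ∑ p, ∑ q, ∑ j, |L (Matrix.single p q 1) j| with hc
  have hcnn : 0 ≤ c := by positivity
  refine ⟨c, hcnn, ?_⟩
  intro y K hK hb j
  have hy : y = L (ATmap A y) := by
    have := congrFun (congrArg DFunLike.coe hL) y
    exact this.symm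
  have hexp : L (ATmap A y) = ∑ p, ∑ q, (ATmap A y) p q • L (Matrix.single p q 1) := by
    conv_lhs => rw [Matrix.matrix_eq_sum_single (ATmap A y)]
    rw [map_sum]
    refine Finset.sum_congr rfl fun p _ => ?_
    rw [map_sum]
    refine Finset.sum_congr rfl fun q _ => ?_
    rw [show Matrix.single p q (ATmap A y p q)
        = (ATmap A y p q) • Matrix.single p q 1 by
      rw [Matrix.smul_single]; simp]
    rw [_root_.map_smul]
  have hyj : y j = ∑ p, ∑ q, (ATmap A y) p q * L (Matrix.single p q 1) j := by
    conv_lhs => rw [hy, hexp]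
    simp [Finset.sum_apply]
  rw [hyj]
  calc |∑ p, ∑ q, (ATmap A y) p q * L (Matrix.single p q 1) j|
      ≤ ∑ p, ∑ q, |(ATmap A y) p q * L (Matrix.single p q 1) j| :=
        (Finset.abs_sum_le_sum_abs _ _).trans (Finset.sum_le_sum fun p _ =>
          Finset.abs_sum_le_sum_abs _ _)
    _ ≤ ∑ p, ∑ q, K * |L (Matrix.single p q 1) j| := by
        refine Finset.sum_le_sum fun p _ => Finset.sum_le_sum fun q _ => ?_
        rw [abs_mul]
        exact mul_le_mul_of_nonneg_right (hb p q) (abs_nonneg _)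
    _ = K * ∑ p, ∑ q, |L (Matrix.single p q 1) j| := by
        rw [Finset.mul_sum]
        exact Finset.sum_congr rfl fun p _ => by rw [Finset.mul_sum]
    _ ≤ K * c := by
        refine mul_le_mul_of_nonneg_left ?_ hK
        rw [hc]
        gcongr with p hp q hq
        exact Finset.single_le_sum
          (f := fun l => |L (Matrix.single p q 1) l|)
          (fun l _ => abs_nonneg _) (Finset.mem_univ j)
    _ = c * K := mul_comm _ _


set_option maxHeartbeats 2000000 in
/-- Assumption 1: for every `U⁰ ∈ F`, the level set
`L = {U ∈ F : g(U) ≥ g(U⁰)}` is bounded. -/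
theorem stmt_2 {n m : ℕ} (hn : 2 ≤ n)
    (e : Fin (n * (n - 1) / 2) ≃ {p : Fin n × Fin n // p.1 < p.2})
    (μ ρ lam : ℝ) (hμ : 0 < μ) (hρ : 0 < ρ) (hlam : 0 < lam)
    (C : Matrix (Fin n) (Fin n) ℝ) (hC : C.IsSymm)
    (b : Fin m → ℝ) (A : Fin m → Matrix (Fin n) (Fin n) ℝ) (hA : ∀ i, (A i).IsSymm)
    (hsurj : ∀ v : Fin m → ℝ, ∃ X : Matrix (Fin n) (Fin n) ℝ, X.IsSymm ∧ AAmap A X = v)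
    (hfeas : ∃ Xhat : Matrix (Fin n) (Fin n) ℝ, Xhat.PosDef ∧ AAmap A Xhat = b)
    (hFne : (Fset ρ lam e A C).Nonempty)
    (U0 : (Fin m → ℝ) × Matrix (Fin n) (Fin n) ℝ × Matrix (Fin n) (Fin n) ℝ)
    (hU0 : U0 ∈ Fset ρ lam e A C) :
    ∃ R : ℝ, ∀ U ∈ {U ∈ Fset ρ lam e A C | gfun A b C μ U0 ≤ gfun A b C μ U},
      normU U ≤ R := by
  classical
  obtain ⟨Xhat, hXhat, hAX⟩ := hfeas
  have hn0 : 0 < n := lt_of_lt_of_le two_pos hn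
  have hn0' : (0:ℝ) < (n:ℝ) := by exact_mod_cast hn0
  obtain ⟨δ, hδ, hq⟩ := quad_lower hn0 hXhat
  set cX : ℝ := ∑ i, ∑ j, |Xhat i j| with hcX
  have hcXnn : 0 ≤ cX := Finset.sum_nonneg fun i _ => Finset.sum_nonneg fun j _ => abs_nonneg _
  set cC : ℝ := ∑ i, ∑ j, |C i j| with hcC
  have hcCnn : 0 ≤ cC := Finset.sum_nonneg fun i _ => Finset.sum_nonneg fun j _ => abs_nonneg _
  have hCentry : ∀ p q, |C p q| ≤ cC := by
    intro p q
    calc |C p q| ≤ ∑ j, |C p j| :=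
          Finset.single_le_sum (f := fun j => |C p j|) (fun _ _ => abs_nonneg _)
            (Finset.mem_univ q)
      _ ≤ cC := Finset.single_le_sum (f := fun i => ∑ j, |C i j|)
          (fun _ _ => Finset.sum_nonneg fun _ _ => abs_nonneg _) (Finset.mem_univ p)
  set ε : ℝ := δ / (2 * μ * n) with hε
  have hεpos : 0 < ε := div_pos hδ (by positivity)
  have hεid : μ * (n:ℝ) * ε = δ / 2 := by
    rw [hε]
    field_simp
  set g0 : ℝ := gfun A b C μ U0 with hg0
  set c0 : ℝ := minner Xhat C + (1/2)*(ρ*cX) + (2*(n*(n-1)/2 : ℕ)*lam)*cX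
      + μ*(n:ℝ)*(-1-Real.log ε) + ((n:ℝ)*μ - (n:ℝ)*μ*Real.log μ) with hc0
  set T0 : ℝ := (c0 - g0) * 2 / δ with hT0
  set Tm : ℝ := max T0 0 with hTm
  have hTmnn : 0 ≤ Tm := le_max_right _ _
  set K : ℝ := cC + ρ/2 + 2*(n*(n-1)/2 : ℕ)*lam + Tm with hK
  have hKnn : 0 ≤ K := by
    have h1 : (0:ℝ) ≤ 2*(n*(n-1)/2 : ℕ)*lam := by positivity
    have h2 : (0:ℝ) ≤ ρ/2 := by positivity
    rw [hK]; linarith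
  obtain ⟨c, hc, hcb⟩ := y_bound A hsurj
  refine ⟨Real.sqrt ((m:ℝ)*(c*K)^2 + (n:ℝ)^2*ρ^2 + (n:ℝ)^2*(2*(n*(n-1)/2 : ℕ)*lam)^2), ?_⟩
  intro U hU
  obtain ⟨hUF, hg⟩ := hU
  obtain ⟨⟨hW, hS⟩, hNd⟩ := hUF
  set P : Matrix (Fin n) (Fin n) ℝ := C + Bmap A U with hPdef
  have hPpd : P.PosDef := hNd
  have hPsd : P.PosSemidef := hPpd.posSemidef
  have hPsymm : P.IsSymm := by
    rw [Matrix.IsSymm, ← Matrix.conjTranspose_eq_transpose_of_trivial]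
    exact hPpd.isHermitian
  have htpos : 0 < P.trace := trace_pos hn0 hPpd
  obtain ⟨Z, hZsymm, hZb, hSZ⟩ := hS
  have hSentry : ∀ p q, |U.2.2 p q| ≤ 2*(n*(n-1)/2 : ℕ)*lam := by
    intro p q
    rw [hSZ]
    exact QT_bound e hlam.le hZb p q
  have hbty : ∑ i, b i * U.1 i = minner Xhat (ATmap A U.1) := by
    rw [← hAX]
    exact bty_eq A Xhat U.1
  have hAT : ATmap A U.1 = C + ((1/2):ℝ) • U.2.1 + U.2.2 - P := by
    rw [hPdef]
    have hB : Bmap A U = -(ATmap A U.1) + ((1/2):ℝ) • U.2.1 + U.2.2 := rfl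
    rw [hB]
    abel
  have hsplit : minner Xhat (ATmap A U.1)
      = minner Xhat C + (1/2)*minner Xhat U.2.1 + minner Xhat U.2.2 - minner Xhat P := by
    rw [hAT, minner_sub_right, minner_add_right, minner_add_right, minner_smul_right]
  have h6 : δ * P.trace ≤ minner Xhat P := by
    rw [minner_eq_trace hPsymm]
    exact trace_quad hPsd hq
  have hWb : |minner Xhat U.2.1| ≤ ρ * cX := minner_abs_bound hW.2
  have hSb : |minner Xhat U.2.2| ≤ (2*(n*(n-1)/2 : ℕ)*lam) * cX := minner_abs_bound hSentry
  have hlogdet : Real.log P.det ≤ (n:ℝ) * Real.log P.trace := by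
    calc Real.log P.det ≤ Real.log (P.trace ^ n) :=
          Real.log_le_log hPpd.det_pos (det_le_trace_pow hPpd)
      _ = (n:ℝ) * Real.log P.trace := by rw [Real.log_pow]
  have hlog : Real.log P.trace ≤ ε * P.trace - 1 - Real.log ε := log_lin_bound htpos hεpos
  have hgU : gfun A b C μ U = (∑ i, b i * U.1 i) + μ * Real.log P.det
      + (n:ℝ)*μ - (n:ℝ)*μ*Real.log μ := rfl
  have ht : P.trace ≤ T0 := by
    have hμn : (0:ℝ) ≤ μ * (n:ℝ) := by positivity
    have h8 : μ * Real.log P.det ≤ (δ/2) * P.trace + μ*(n:ℝ)*(-1-Real.log ε) := by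
      have h9 : μ * Real.log P.det ≤ μ * ((n:ℝ) * Real.log P.trace) :=
        mul_le_mul_of_nonneg_left hlogdet hμ.le
      have h10 : μ * ((n:ℝ) * Real.log P.trace)
          ≤ μ * ((n:ℝ) * (ε * P.trace - 1 - Real.log ε)) := by
        apply mul_le_mul_of_nonneg_left _ hμ.le
        exact mul_le_mul_of_nonneg_left hlog hn0'.le
      have h11 : μ * ((n:ℝ) * (ε * P.trace - 1 - Real.log ε))
          = (μ * (n:ℝ) * ε) * P.trace + μ*(n:ℝ)*(-1-Real.log ε) := by ring
      rw [h11, hεid] at h10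
      linarith
    have h12 : ∑ i, b i * U.1 i ≤ minner Xhat C + (1/2)*(ρ*cX)
        + (2*(n*(n-1)/2 : ℕ)*lam)*cX - δ * P.trace := by
      rw [hbty, hsplit]
      have hw2 := (abs_le.mp hWb).2
      have hs2 := (abs_le.mp hSb).2
      linarith [h6]
    have h13 : g0 ≤ c0 - (δ/2) * P.trace := by
      rw [hg0]
      calc gfun A b C μ U0 ≤ gfun A b C μ U := hg
        _ = (∑ i, b i * U.1 i) + μ * Real.log P.det + (n:ℝ)*μ - (n:ℝ)*μ*Real.log μ := hgU
        _ ≤ c0 - (δ/2) * P.trace := by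
            rw [hc0]
            linarith
    rw [hT0]
    rw [le_div_iff₀ hδ]
    have h14 : (δ/2) * P.trace ≤ c0 - g0 := by linarith
    have h15 : 2 * ((δ/2) * P.trace) ≤ 2 * (c0 - g0) := by linarith
    calc P.trace * δ = 2 * ((δ/2) * P.trace) := by ring
      _ ≤ 2 * (c0 - g0) := h15
      _ = (c0 - g0) * 2 := by ring
  have hPentry : ∀ p q, |P p q| ≤ Tm := fun p q =>
    (psd_entry_le_trace hPsd p q).trans (ht.trans (le_max_left _ _))
  have hATentry : ∀ p q, |ATmap A U.1 p q| ≤ K := by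
    intro p q
    rw [hAT]
    have hEq : (C + ((1/2):ℝ) • U.2.1 + U.2.2 - P) p q
        = C p q + (1/2) * U.2.1 p q + U.2.2 p q - P p q := by
      simp [Matrix.add_apply, Matrix.sub_apply, Matrix.smul_apply]
    rw [hEq, hK]
    have h1 := abs_le.mp (hCentry p q)
    have h2 := abs_le.mp (hW.2 p q)
    have h3 := abs_le.mp (hSentry p q)
    have h4 := abs_le.mp (hPentry p q)
    rw [abs_le]
    constructor <;>
      [linarith [h1.1, h1.2, h2.1, h2.2, h3.1, h3.2, h4.1, h4.2];
       linarith [h1.1, h1.2, h2.1, h2.2, h3.1, h3.2, h4.1, h4.2]]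
  have hyb : ∀ j, |U.1 j| ≤ c * K := hcb U.1 K hKnn hATentry
  have hcKnn : 0 ≤ c * K := mul_nonneg hc hKnn
  unfold normU
  apply Real.sqrt_le_sqrt
  have he2 : eunorm U.1 ^ 2 = ∑ j, U.1 j ^ 2 := by
    rw [eunorm, Real.sq_sqrt]
    exact Finset.sum_nonneg fun j _ => sq_nonneg _
  have hf1 : frobNorm U.2.1 ^ 2 = ∑ i, ∑ j, U.2.1 i j ^ 2 := by
    rw [frobNorm, Real.sq_sqrt]
    exact Finset.sum_nonneg fun i _ => Finset.sum_nonneg fun j _ => sq_nonneg _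
  have hf2 : frobNorm U.2.2 ^ 2 = ∑ i, ∑ j, U.2.2 i j ^ 2 := by
    rw [frobNorm, Real.sq_sqrt]
    exact Finset.sum_nonneg fun i _ => Finset.sum_nonneg fun j _ => sq_nonneg _
  rw [he2, hf1, hf2]
  have hb1 : ∑ j, U.1 j ^ 2 ≤ (m:ℝ) * (c*K)^2 := by
    calc ∑ j, U.1 j ^ 2 ≤ ∑ _j : Fin m, (c*K)^2 := by
          refine Finset.sum_le_sum fun j _ => ?_
          have h := abs_le.mp (hyb j)
          exact sq_le_sq' h.1 h.2
      _ = (m:ℝ) * (c*K)^2 := by simp [mul_comm]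
  have hb2 : ∑ i, ∑ j, U.2.1 i j ^ 2 ≤ (n:ℝ)^2 * ρ^2 := by
    calc ∑ i, ∑ j, U.2.1 i j ^ 2 ≤ ∑ _i : Fin n, ∑ _j : Fin n, ρ^2 := by
          refine Finset.sum_le_sum fun i _ => Finset.sum_le_sum fun j _ => ?_
          have h := abs_le.mp (hW.2 i j)
          exact sq_le_sq' h.1 h.2
      _ = (n:ℝ)^2 * ρ^2 := by simp [Finset.sum_const]; ring
  have hb3 : ∑ i, ∑ j, U.2.2 i j ^ 2 ≤ (n:ℝ)^2 * (2*(n*(n-1)/2 : ℕ)*lam)^2 := by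
    calc ∑ i, ∑ j, U.2.2 i j ^ 2
        ≤ ∑ _i : Fin n, ∑ _j : Fin n, (2*(n*(n-1)/2 : ℕ)*lam)^2 := by
          refine Finset.sum_le_sum fun i _ => Finset.sum_le_sum fun j _ => ?_
          have h := abs_le.mp (hSentry i j)
          exact sq_le_sq' h.1 h.2
      _ = (n:ℝ)^2 * (2*(n*(n-1)/2 : ℕ)*lam)^2 := by simp [Finset.sum_const]; ring
  exact add_le_add (add_le_add hb1 hb2) hb3
end
end

section
/- Suppose Assumption 1 holds, fix U⁰ ∈ F, and let L := { U ∈ F : g(U) ≥ g(U⁰) }. Then the set { X(U) : U ∈ L } is bounded; moreover, there exist constants 0 < β_min ≤ β_max such that β_min·I ⪯ X(U) ⪯ β_max·I for all U ∈ L. -/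
open Matrix

noncomputable section

namespace StmtAux

variable {k : ℕ}

lemma isSymm_iff_herm {M : Matrix (Fin k) (Fin k) ℝ} : M.IsHermitian ↔ M.IsSymm := by
  rw [Matrix.IsHermitian, Matrix.IsSymm, conjTranspose_eq_transpose_of_trivial]

lemma psd_diag_nonneg {M : Matrix (Fin k) (Fin k) ℝ} (hM : M.PosSemidef) (i : Fin k) :
    0 ≤ M i i := by
  exact hM.diag_nonneg

lemma psd_trace_nonneg {M : Matrix (Fin k) (Fin k) ℝ} (hM : M.PosSemidef) : 0 ≤ M.trace := by
  rw [Matrix.trace]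
  exact Finset.sum_nonneg fun i _ => psd_diag_nonneg hM i

lemma psd_trace_mul_nonneg {M P : Matrix (Fin k) (Fin k) ℝ} (hM : M.PosSemidef)
    (hP : P.PosSemidef) : 0 ≤ (M * P).trace := by
  open MatrixOrder in
  obtain ⟨B, rfl⟩ := CStarAlgebra.nonneg_iff_eq_star_mul_self.mp hM.nonneg
  rw [Matrix.mul_assoc, Matrix.trace_mul_comm]
  exact psd_trace_nonneg (hP.mul_mul_conjTranspose_same B)

section Conj

variable {V : Matrix (Fin k) (Fin k) ℝ} (hV1 : Vᴴ * V = 1) (hV2 : V * Vᴴ = 1)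

lemma diag_smul_one (c : ℝ) :
    (diagonal (fun _ => c) : Matrix (Fin k) (Fin k) ℝ) = c • 1 := by
  ext i j
  by_cases h : i = j <;> simp [Matrix.diagonal_apply, Matrix.one_apply, h]

lemma conj_psd (d : Fin k → ℝ) (hd : ∀ i, 0 ≤ d i) :
    (V * diagonal d * Vᴴ).PosSemidef :=
  (Matrix.PosSemidef.diagonal hd).mul_mul_conjTranspose_same V

include hV1 in
lemma trace_conj (d : Fin k → ℝ) : (V * diagonal d * Vᴴ).trace = ∑ i, d i := by
  rw [Matrix.trace_mul_cycle, hV1, Matrix.one_mul, trace_diagonal]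

include hV1 in
lemma conj_mul (d1 d2 : Fin k → ℝ) :
    (V * diagonal d1 * Vᴴ) * (V * diagonal d2 * Vᴴ)
      = V * diagonal (fun i => d1 i * d2 i) * Vᴴ := by
  have h : (V * diagonal d1 * Vᴴ) * (V * diagonal d2 * Vᴴ)
      = V * (diagonal d1 * (Vᴴ * V) * diagonal d2) * Vᴴ := by
    simp only [Matrix.mul_assoc]
  rw [h, hV1, Matrix.mul_one, diagonal_mul_diagonal]

include hV2 in
lemma smul_one_repr (c : ℝ) :
    c • (1 : Matrix (Fin k) (Fin k) ℝ) = V * diagonal (fun _ => c) * Vᴴ := by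
  rw [diag_smul_one, Matrix.mul_smul, Matrix.smul_mul, Matrix.mul_one, hV2]

lemma conj_smul (c : ℝ) (d : Fin k → ℝ) :
    c • (V * diagonal d * Vᴴ) = V * diagonal (fun i => c * d i) * Vᴴ := by
  rw [← Matrix.smul_mul, ← Matrix.mul_smul]
  congr 1
  ext i j
  by_cases h : i = j <;> simp [Matrix.diagonal_apply, h] <;> ring

lemma conj_sub (d1 d2 : Fin k → ℝ) :
    V * diagonal d1 * Vᴴ - V * diagonal d2 * Vᴴ
      = V * diagonal (fun i => d1 i - d2 i) * Vᴴ := by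
  rw [← Matrix.sub_mul, ← Matrix.mul_sub, diagonal_sub]

include hV1 hV2 in
lemma conj_inv (d : Fin k → ℝ) (hd : ∀ i, d i ≠ 0) :
    (V * diagonal d * Vᴴ)⁻¹ = V * diagonal (fun i => (d i)⁻¹) * Vᴴ := by
  refine inv_eq_right_inv ?_
  rw [conj_mul hV1]
  have : (fun i => d i * (d i)⁻¹) = fun _ => (1 : ℝ) :=
    funext fun i => mul_inv_cancel₀ (hd i)
  rw [this, diag_smul_one, one_smul, Matrix.mul_one, hV2]

end Conj

section Spectral

variable {P : Matrix (Fin k) (Fin k) ℝ} (hP : P.IsHermitian)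

local notation "V" => (hP.eigenvectorUnitary : Matrix (Fin k) (Fin k) ℝ)

lemma V_mul_Vt : V * Vᴴ = 1 := by
  rw [← Matrix.star_eq_conjTranspose]
  exact (Matrix.mem_unitaryGroup_iff).mp hP.eigenvectorUnitary.2

lemma Vt_mul_V : Vᴴ * V = 1 := by
  rw [← Matrix.star_eq_conjTranspose]
  exact (Matrix.mem_unitaryGroup_iff').mp hP.eigenvectorUnitary.2

lemma spectral_repr : P = V * diagonal hP.eigenvalues * Vᴴ := by
  simpa [Matrix.star_eq_conjTranspose] using hP.spectral_theorem

lemma trace_eq_sum_eigs : P.trace = ∑ i, hP.eigenvalues i := by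
  conv_lhs => rw [spectral_repr hP]
  exact trace_conj (Vt_mul_V hP) _

lemma det_eq_prod_eigs : P.det = ∏ i, hP.eigenvalues i := by
  simpa using hP.det_eq_prod_eigenvalues

end Spectral

/-- The key representation of `μ • P⁻¹`. -/
lemma smul_inv_repr {P : Matrix (Fin k) (Fin k) ℝ} (hP : P.PosDef) (μ : ℝ) :
    μ • P⁻¹ = (hP.1.eigenvectorUnitary : Matrix (Fin k) (Fin k) ℝ)
      * diagonal (fun i => μ * (hP.1.eigenvalues i)⁻¹)
      * (hP.1.eigenvectorUnitary : Matrix (Fin k) (Fin k) ℝ)ᴴ := by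
  have h1 : P⁻¹ = (hP.1.eigenvectorUnitary : Matrix (Fin k) (Fin k) ℝ)
      * diagonal (fun i => (hP.1.eigenvalues i)⁻¹)
      * (hP.1.eigenvectorUnitary : Matrix (Fin k) (Fin k) ℝ)ᴴ := by
    conv_lhs => rw [spectral_repr hP.1]
    exact conj_inv (Vt_mul_V hP.1) (V_mul_Vt hP.1) _
      (fun i => ne_of_gt (hP.eigenvalues_pos i))
  rw [h1, conj_smul]

/-- The sandwich lemma. -/
lemma sandwich {P : Matrix (Fin k) (Fin k) ℝ} (hP : P.PosDef) {μ a b : ℝ}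
    (hμ : 0 < μ) (ha : 0 < a) (hb : 0 < b)
    (hlo : ∀ i, a ≤ hP.1.eigenvalues i) (hhi : ∀ i, hP.1.eigenvalues i ≤ b) :
    (μ • P⁻¹ - (μ / b) • (1 : Matrix (Fin k) (Fin k) ℝ)).PosSemidef ∧
      ((μ / a) • (1 : Matrix (Fin k) (Fin k) ℝ) - μ • P⁻¹).PosSemidef := by
  have hpos : ∀ i, 0 < hP.1.eigenvalues i := hP.eigenvalues_pos
  constructor
  · rw [smul_inv_repr hP μ, smul_one_repr (V_mul_Vt hP.1) (μ / b), conj_sub]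
    refine conj_psd _ fun i => ?_
    have h1 : μ / b ≤ μ / hP.1.eigenvalues i :=
      div_le_div_of_nonneg_left hμ.le (hpos i) (hhi i)
    simpa [div_eq_mul_inv] using sub_nonneg.2 h1
  · rw [smul_inv_repr hP μ, smul_one_repr (V_mul_Vt hP.1) (μ / a), conj_sub]
    refine conj_psd _ fun i => ?_
    have h1 : μ / hP.1.eigenvalues i ≤ μ / a :=
      div_le_div_of_nonneg_left hμ.le ha (hlo i)
    simpa [div_eq_mul_inv] using sub_nonneg.2 h1

/-- Smallest eigenvalue bound for a positive definite matrix. -/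
lemma min_eig {X : Matrix (Fin k) (Fin k) ℝ} (hk : 0 < k) (hX : X.PosDef) :
    ∃ c : ℝ, 0 < c ∧ (X - c • (1 : Matrix (Fin k) (Fin k) ℝ)).PosSemidef := by
  haveI : Nonempty (Fin k) := ⟨⟨0, hk⟩⟩
  obtain ⟨i0, -, hmin⟩ := Finset.exists_min_image Finset.univ hX.1.eigenvalues
    ⟨Classical.arbitrary _, Finset.mem_univ _⟩
  refine ⟨hX.1.eigenvalues i0, hX.eigenvalues_pos i0, ?_⟩
  have hrep : X - hX.1.eigenvalues i0 • (1 : Matrix (Fin k) (Fin k) ℝ)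
      = (hX.1.eigenvectorUnitary : Matrix (Fin k) (Fin k) ℝ)
        * diagonal (fun i => hX.1.eigenvalues i - hX.1.eigenvalues i0)
        * (hX.1.eigenvectorUnitary : Matrix (Fin k) (Fin k) ℝ)ᴴ := by
    rw [← conj_sub, ← spectral_repr hX.1, ← smul_one_repr (V_mul_Vt hX.1)]
  rw [hrep]
  exact conj_psd _ fun i => sub_nonneg.2 (hmin i (Finset.mem_univ i))


section Scalar

lemma f_lower {c μ t : ℝ} (hc : 0 < c) (hμ : 0 < μ) (ht : 0 < t) :
    μ + μ * Real.log (c / μ) ≤ c * t - μ * Real.log t := by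
  have h := Real.log_le_sub_one_of_pos (show 0 < t * (c / μ) by positivity)
  rw [Real.log_mul (ne_of_gt ht) (by positivity)] at h
  have h2 := mul_le_mul_of_nonneg_left h hμ.le
  have key : μ * (t * (c / μ)) = c * t := by field_simp
  rw [mul_add, mul_sub, key, mul_one] at h2
  linarith

lemma f_upper_bound {c μ t K' : ℝ} (hc : 0 < c) (hμ : 0 < μ) (ht : 0 < t)
    (h : c * t - μ * Real.log t ≤ K') :
    t ≤ (2 / c) * (K' - μ + μ * Real.log (2 * μ / c)) := by
  have h1 := Real.log_le_sub_one_of_pos (show 0 < t * (c / (2 * μ)) by positivity)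
  rw [Real.log_mul (ne_of_gt ht) (by positivity)] at h1
  have h2 := mul_le_mul_of_nonneg_left h1 hμ.le
  have key : μ * (t * (c / (2 * μ))) = c * t / 2 := by field_simp
  rw [mul_add, mul_sub, key, mul_one] at h2
  have hlog : Real.log (c / (2 * μ)) = -Real.log (2 * μ / c) := by
    rw [← Real.log_inv]; congr 1; field_simp
  rw [hlog] at h2
  have h3 : (c / 2) * t ≤ K' - μ + μ * Real.log (2 * μ / c) := by linarith
  have h4 : t = (2 / c) * ((c / 2) * t) := by field_simp
  rw [h4]
  exact mul_le_mul_of_nonneg_left h3 (by positivity)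

lemma f_lower_bound {c μ t K' : ℝ} (hc : 0 < c) (hμ : 0 < μ) (ht : 0 < t)
    (h : c * t - μ * Real.log t ≤ K') : Real.exp (-(K' / μ)) ≤ t := by
  have h0 : -K' ≤ Real.log t * μ := by nlinarith [mul_pos hc ht]
  have h1 : -K' / μ ≤ Real.log t := (div_le_iff₀ hμ).2 h0
  have h1' : -(K' / μ) ≤ Real.log t := by rwa [neg_div] at h1
  calc Real.exp (-(K' / μ)) ≤ Real.exp (Real.log t) := Real.exp_le_exp.2 h1'
    _ = t := Real.exp_log ht

lemma sum_le_imp_each {k : ℕ} {g : Fin k → ℝ} {fmin K : ℝ} (hmin : ∀ i, fmin ≤ g i)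
    (h : ∑ i, g i ≤ K) (i : Fin k) : g i ≤ K - ((k - 1 : ℕ) : ℝ) * fmin := by
  have hs : ∑ j, g j = g i + ∑ j ∈ Finset.univ.erase i, g j :=
    (Finset.add_sum_erase _ g (Finset.mem_univ i)).symm
  have h2 : ((Finset.univ.erase i).card : ℝ) * fmin ≤ ∑ j ∈ Finset.univ.erase i, g j := by
    have := Finset.card_nsmul_le_sum (Finset.univ.erase i) g fmin (fun x _ => hmin x)
    simpa [nsmul_eq_mul] using this
  have hcard : (Finset.univ.erase i).card = k - 1 := by
    simp [Finset.card_erase_of_mem]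
  rw [hcard] at h2
  linarith

end Scalar

section Minner

variable {k : ℕ}

lemma minner_eq_trace (A B : Matrix (Fin k) (Fin k) ℝ) : minner A B = (Aᵀ * B).trace := by
  simp only [minner, Matrix.trace, Matrix.diag, Matrix.mul_apply, Matrix.transpose_apply]
  rw [Finset.sum_comm]

lemma minner_abs_le {X M : Matrix (Fin k) (Fin k) ℝ} {ρ : ℝ} (h : ∀ i j, |M i j| ≤ ρ) :
    |minner X M| ≤ (∑ i, ∑ j, |X i j|) * ρ := by
  have h1 : |minner X M| ≤ ∑ i, ∑ j, |X i j * M i j| := by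
    refine (Finset.abs_sum_le_sum_abs _ _).trans ?_
    exact Finset.sum_le_sum fun i _ => Finset.abs_sum_le_sum_abs _ _
  have h2 : ∑ i, ∑ j, |X i j * M i j| ≤ ∑ i, ∑ j, |X i j| * ρ := by
    refine Finset.sum_le_sum fun i _ => Finset.sum_le_sum fun j _ => ?_
    rw [abs_mul]
    exact mul_le_mul_of_nonneg_left (h i j) (abs_nonneg _)
  have h3 : ∑ i, ∑ j, |X i j| * ρ = (∑ i, ∑ j, |X i j|) * ρ := by
    rw [Finset.sum_mul]
    exact Finset.sum_congr rfl fun i _ => (Finset.sum_mul _ _ _).symm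
  linarith

lemma sum_sq_eq_trace {X : Matrix (Fin k) (Fin k) ℝ} (hX : X.IsSymm) :
    ∑ i, ∑ j, X i j ^ 2 = (X * X).trace := by
  simp only [Matrix.trace, Matrix.diag, Matrix.mul_apply]
  refine Finset.sum_congr rfl fun i _ => Finset.sum_congr rfl fun j _ => ?_
  rw [pow_two]
  congr 1
  conv_rhs => rw [← hX]
  rfl

end Minner

section QT

variable {n : ℕ}

lemma QT_isSymm (e : Fin (n * (n - 1) / 2) ≃ {p : Fin n × Fin n // p.1 < p.2})
    (Z : Matrix (Fin (n * (n - 1) / 2)) (Fin (n * (n - 1) / 2)) ℝ) : (QTmap e Z).IsSymm := by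
  rw [Matrix.IsSymm]
  ext i j
  rw [Matrix.transpose_apply]
  rcases lt_trichotomy i j with h | h | h
  · simp [QTmap, h, lt_asymm h]
  · simp [QTmap, h]
  · simp [QTmap, h, lt_asymm h]

lemma QT_abs_le (e : Fin (n * (n - 1) / 2) ≃ {p : Fin n × Fin n // p.1 < p.2})
    {Z : Matrix (Fin (n * (n - 1) / 2)) (Fin (n * (n - 1) / 2)) ℝ} {lam : ℝ} (hlam : 0 ≤ lam)
    (hZ : ∀ a b, |Z a b| ≤ lam) (i j : Fin n) :
    |QTmap e Z i j| ≤ 2 * ((n * (n - 1) / 2 : ℕ) : ℝ) * lam := by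
  have hsum : ∀ f : Fin (n * (n - 1) / 2) → ℝ, (∀ l, |f l| ≤ lam) →
      |∑ l, f l| ≤ ((n * (n - 1) / 2 : ℕ) : ℝ) * lam := by
    intro f hf
    refine (Finset.abs_sum_le_sum_abs _ _).trans ?_
    have := Finset.sum_le_card_nsmul Finset.univ (fun l => |f l|) lam (fun x _ => hf x)
    simpa [nsmul_eq_mul] using this
  unfold QTmap
  rcases lt_trichotomy i j with h | h | h
  · rw [dif_pos h]
    have t1 : |∑ l, if e.symm ⟨(i, j), h⟩ < l then Z (e.symm ⟨(i, j), h⟩) l else 0|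
        ≤ ((n * (n - 1) / 2 : ℕ) : ℝ) * lam := by
      refine hsum _ fun l => ?_
      by_cases hc : e.symm ⟨(i, j), h⟩ < l <;> simp [hc, hZ _ l, hlam]
    have t2 : |∑ l, if l < e.symm ⟨(i, j), h⟩ then Z l (e.symm ⟨(i, j), h⟩) else 0|
        ≤ ((n * (n - 1) / 2 : ℕ) : ℝ) * lam := by
      refine hsum _ fun l => ?_
      by_cases hc : l < e.symm ⟨(i, j), h⟩ <;> simp [hc, hZ l _, hlam]
    refine (abs_sub _ _).trans ?_
    linarith
  · simp [h, lt_irrefl]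
    positivity
  · rw [dif_neg (lt_asymm h), dif_pos h]
    have t1 : |∑ l, if e.symm ⟨(j, i), h⟩ < l then Z (e.symm ⟨(j, i), h⟩) l else 0|
        ≤ ((n * (n - 1) / 2 : ℕ) : ℝ) * lam := by
      refine hsum _ fun l => ?_
      by_cases hc : e.symm ⟨(j, i), h⟩ < l <;> simp [hc, hZ _ l, hlam]
    have t2 : |∑ l, if l < e.symm ⟨(j, i), h⟩ then Z l (e.symm ⟨(j, i), h⟩) else 0|
        ≤ ((n * (n - 1) / 2 : ℕ) : ℝ) * lam := by
      refine hsum _ fun l => ?_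
      by_cases hc : l < e.symm ⟨(j, i), h⟩ <;> simp [hc, hZ l _, hlam]
    refine (abs_sub _ _).trans ?_
    linarith

end QT


end StmtAux


open StmtAux in
/-- Assumption 1: for `U⁰ ∈ F` and `L = {U ∈ F : g(U) ≥ g(U⁰)}`, the set
`{X(U) : U ∈ L}` is bounded; moreover there are `0 < β_min ≤ β_max` with
`β_min I ⪯ X(U) ⪯ β_max I` for all `U ∈ L`. -/
theorem stmt_3 {n m : ℕ} (hn : 2 ≤ n)
    (e : Fin (n * (n - 1) / 2) ≃ {p : Fin n × Fin n // p.1 < p.2})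
    (μ ρ lam : ℝ) (hμ : 0 < μ) (hρ : 0 < ρ) (hlam : 0 < lam)
    (C : Matrix (Fin n) (Fin n) ℝ) (hC : C.IsSymm)
    (b : Fin m → ℝ) (A : Fin m → Matrix (Fin n) (Fin n) ℝ) (hA : ∀ i, (A i).IsSymm)
    (hsurj : ∀ v : Fin m → ℝ, ∃ X : Matrix (Fin n) (Fin n) ℝ, X.IsSymm ∧ AAmap A X = v)
    (hfeas : ∃ Xhat : Matrix (Fin n) (Fin n) ℝ, Xhat.PosDef ∧ AAmap A Xhat = b)
    (hFne : (Fset ρ lam e A C).Nonempty)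
    (U0 : (Fin m → ℝ) × Matrix (Fin n) (Fin n) ℝ × Matrix (Fin n) (Fin n) ℝ)
    (hU0 : U0 ∈ Fset ρ lam e A C)
    (L : Set ((Fin m → ℝ) × Matrix (Fin n) (Fin n) ℝ × Matrix (Fin n) (Fin n) ℝ))
    (hL : L = {U ∈ Fset ρ lam e A C | gfun A b C μ U0 ≤ gfun A b C μ U}) :
    (∃ R : ℝ, ∀ U ∈ L, frobNorm (XofU A C μ U) ≤ R) ∧
    ∃ βmin βmax : ℝ, 0 < βmin ∧ βmin ≤ βmax ∧
      ∀ U ∈ L,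
        (XofU A C μ U - βmin • (1 : Matrix (Fin n) (Fin n) ℝ)).PosSemidef ∧
        (βmax • (1 : Matrix (Fin n) (Fin n) ℝ) - XofU A C μ U).PosSemidef := by
  classical
  obtain ⟨Xhat, hXpd, hXb⟩ := hfeas
  have hnpos : 0 < n := lt_of_lt_of_le (by norm_num) hn
  obtain ⟨c, hc, hcpsd⟩ := StmtAux.min_eig hnpos hXpd
  have hXsym : Xhat.IsSymm := StmtAux.isSymm_iff_herm.mp hXpd.1
  have hmt : ∀ M : Matrix (Fin n) (Fin n) ℝ, (Xhat * M).trace = minner Xhat M := by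
    intro M
    rw [StmtAux.minner_eq_trace, hXsym]
  set T : ℝ := ∑ i, ∑ j, |Xhat i j| with hT
  set Nr : ℝ := ((n * (n - 1) / 2 : ℕ) : ℝ) with hNr
  set g0c : ℝ := (∑ i, b i * U0.1 i) + μ * Real.log (C + Bmap A U0).det with hg0c
  set K : ℝ := (Xhat * C).trace - g0c + (1 / 2) * (T * ρ) + T * (2 * Nr * lam) with hK
  set fmin : ℝ := μ + μ * Real.log (c / μ) with hfmin
  set K' : ℝ := K - ((n - 1 : ℕ) : ℝ) * fmin with hK'
  set aa : ℝ := Real.exp (-(K' / μ)) with haa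
  set bb : ℝ := max 1 ((2 / c) * (K' - μ + μ * Real.log (2 * μ / c))) with hbb
  have haa_pos : 0 < aa := by rw [haa]; exact Real.exp_pos _
  have hbb_pos : 0 < bb := lt_of_lt_of_le one_pos (le_max_left _ _)
  have main : ∀ U ∈ L, ∀ hpd : (C + Bmap A U).PosDef, ∀ i : Fin n,
      aa ≤ hpd.1.eigenvalues i ∧ hpd.1.eigenvalues i ≤ bb := by
    intro U hU hpd i
    rw [hL] at hU
    obtain ⟨⟨⟨hWs, hSs⟩, _⟩, hg⟩ := hU
    obtain ⟨hWsym, hWbd⟩ := hWs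
    obtain ⟨Z, hZsym, hZbd, hSeq⟩ := hSs
    set lamv := hpd.1.eigenvalues with hlamv
    have hlpos : ∀ j, 0 < lamv j := hpd.eigenvalues_pos
    -- trace lower bound via smallest eigenvalue of Xhat
    have h1 : c * (C + Bmap A U).trace ≤ (Xhat * (C + Bmap A U)).trace := by
      have h0 := StmtAux.psd_trace_mul_nonneg hcpsd hpd.posSemidef
      rw [Matrix.sub_mul, Matrix.smul_mul, Matrix.one_mul, trace_sub, trace_smul,
        smul_eq_mul] at h0
      linarith
    -- trace decomposition
    have hsplit : (Xhat * (C + Bmap A U)).trace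
        = (Xhat * C).trace - (Xhat * ATmap A U.1).trace
          + (1 / 2) * (Xhat * U.2.1).trace + (Xhat * U.2.2).trace := by
      simp only [Bmap, Matrix.mul_add, Matrix.mul_neg, Matrix.mul_smul, trace_add, trace_neg,
        trace_smul, smul_eq_mul]
      ring
    have hATtr : (Xhat * ATmap A U.1).trace = ∑ l, U.1 l * b l := by
      rw [ATmap, Matrix.mul_sum, trace_sum]
      refine Finset.sum_congr rfl fun l _ => ?_
      rw [Matrix.mul_smul, trace_smul, smul_eq_mul]
      congr 1
      rw [trace_mul_comm]
      conv_lhs => rw [← hA l]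
      rw [← StmtAux.minner_eq_trace]
      exact congrFun hXb l
    -- bounds on the W and S terms
    have hWle : (Xhat * U.2.1).trace ≤ T * ρ := by
      rw [hmt]
      exact le_of_abs_le (StmtAux.minner_abs_le hWbd)
    have hSle : (Xhat * U.2.2).trace ≤ T * (2 * Nr * lam) := by
      rw [hmt]
      refine le_of_abs_le (StmtAux.minner_abs_le ?_)
      intro i' j'
      rw [hSeq]
      exact StmtAux.QT_abs_le e hlam.le hZbd i' j'
    -- the g inequality
    have hgineq : g0c ≤ (∑ l, b l * U.1 l) + μ * Real.log (C + Bmap A U).det := by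
      simp only [gfun] at hg
      rw [hg0c]
      linarith
    have hyb : ∑ l, U.1 l * b l = ∑ l, b l * U.1 l :=
      Finset.sum_congr rfl fun l _ => mul_comm _ _
    -- combined inequality
    have hcomb : c * (C + Bmap A U).trace - μ * Real.log (C + Bmap A U).det ≤ K := by
      rw [hK]
      linarith
    have htr : (C + Bmap A U).trace = ∑ j, lamv j := StmtAux.trace_eq_sum_eigs hpd.1
    have hdet : Real.log (C + Bmap A U).det = ∑ j, Real.log (lamv j) := by
      rw [StmtAux.det_eq_prod_eigs hpd.1]
      exact Real.log_prod fun j _ => ne_of_gt (hlpos j)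
    have hsum : ∑ j, (c * lamv j - μ * Real.log (lamv j)) ≤ K := by
      rw [Finset.sum_sub_distrib, ← Finset.mul_sum, ← Finset.mul_sum, ← htr, ← hdet]
      exact hcomb
    have heach := StmtAux.sum_le_imp_each
      (g := fun j => c * lamv j - μ * Real.log (lamv j)) (fmin := fmin)
      (fun j => by rw [hfmin]; exact StmtAux.f_lower hc hμ (hlpos j)) hsum i
    have heach' : c * lamv i - μ * Real.log (lamv i) ≤ K' := by
      rw [hK']
      exact heach
    constructor
    · rw [haa]
      exact StmtAux.f_lower_bound hc hμ (hlpos i) heach'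
    · exact (StmtAux.f_upper_bound hc hμ (hlpos i) heach').trans (le_max_right _ _)
  have hsand : ∀ U ∈ L, (XofU A C μ U - (μ / bb) • (1 : Matrix (Fin n) (Fin n) ℝ)).PosSemidef ∧
      ((μ / aa) • (1 : Matrix (Fin n) (Fin n) ℝ) - XofU A C μ U).PosSemidef := by
    intro U hU
    have hpd : (C + Bmap A U).PosDef := by
      rw [hL] at hU
      exact hU.1.2
    have h := StmtAux.sandwich hpd hμ haa_pos hbb_pos (fun i => (main U hU hpd i).1)
      (fun i => (main U hU hpd i).2)
    simpa only [XofU] using h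
  constructor
  · refine ⟨Real.sqrt ((n : ℝ) * (μ / aa) ^ 2), fun U hU => ?_⟩
    have hpd : (C + Bmap A U).PosDef := by
      rw [hL] at hU
      exact hU.1.2
    have hXherm : (XofU A C μ U).IsHermitian := by
      have h := (hsand U hU).1.1
      have heq : XofU A C μ U
          = (XofU A C μ U - (μ / bb) • (1 : Matrix (Fin n) (Fin n) ℝ))
            + (μ / bb) • (1 : Matrix (Fin n) (Fin n) ℝ) := by
        abel
      rw [heq]
      refine h.add ?_
      rw [← StmtAux.diag_smul_one]
      exact isHermitian_diagonal _
    have hXsymU : (XofU A C μ U).IsSymm := StmtAux.isSymm_iff_herm.mp hXherm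
    rw [frobNorm]
    refine Real.sqrt_le_sqrt ?_
    rw [StmtAux.sum_sq_eq_trace hXsymU]
    have hrep : XofU A C μ U * XofU A C μ U
        = (hpd.1.eigenvectorUnitary : Matrix (Fin n) (Fin n) ℝ)
          * diagonal (fun i => (μ * (hpd.1.eigenvalues i)⁻¹) * (μ * (hpd.1.eigenvalues i)⁻¹))
          * (hpd.1.eigenvectorUnitary : Matrix (Fin n) (Fin n) ℝ)ᴴ := by
      simp only [XofU]
      rw [StmtAux.smul_inv_repr hpd μ, StmtAux.conj_mul (StmtAux.Vt_mul_V hpd.1)]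
    rw [hrep, StmtAux.trace_conj (StmtAux.Vt_mul_V hpd.1)]
    have hbd : ∀ i : Fin n,
        (μ * (hpd.1.eigenvalues i)⁻¹) * (μ * (hpd.1.eigenvalues i)⁻¹) ≤ (μ / aa) ^ 2 := by
      intro i
      have hlo := (main U hU hpd i).1
      have h2 : μ * (hpd.1.eigenvalues i)⁻¹ ≤ μ / aa := by
        rw [← div_eq_mul_inv]
        exact div_le_div_of_nonneg_left hμ.le haa_pos hlo
      have h3 : 0 ≤ μ * (hpd.1.eigenvalues i)⁻¹ :=
        le_of_lt (mul_pos hμ (inv_pos.2 (hpd.eigenvalues_pos i)))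
      have h4 : (0 : ℝ) ≤ μ / aa := le_trans h3 h2
      calc (μ * (hpd.1.eigenvalues i)⁻¹) * (μ * (hpd.1.eigenvalues i)⁻¹)
          ≤ (μ / aa) * (μ / aa) := mul_le_mul h2 h2 h3 h4
        _ = (μ / aa) ^ 2 := by ring
    calc ∑ i, (μ * (hpd.1.eigenvalues i)⁻¹) * (μ * (hpd.1.eigenvalues i)⁻¹)
        ≤ ∑ _i : Fin n, (μ / aa) ^ 2 := Finset.sum_le_sum fun i _ => hbd i
      _ = (n : ℝ) * (μ / aa) ^ 2 := by
          rw [Finset.sum_const, Finset.card_univ, Fintype.card_fin, nsmul_eq_mul]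
  · refine ⟨μ / bb, max (μ / bb) (μ / aa), div_pos hμ hbb_pos, le_max_left _ _, fun U hU => ?_⟩
    obtain ⟨h1, h2⟩ := hsand U hU
    refine ⟨h1, ?_⟩
    have heq : max (μ / bb) (μ / aa) • (1 : Matrix (Fin n) (Fin n) ℝ) - XofU A C μ U
        = ((μ / aa) • (1 : Matrix (Fin n) (Fin n) ℝ) - XofU A C μ U)
          + (max (μ / bb) (μ / aa) - μ / aa) • (1 : Matrix (Fin n) (Fin n) ℝ) := by
      rw [sub_smul]
      abel
    rw [heq]
    refine h2.add ?_
    rw [← StmtAux.diag_smul_one]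
    exact Matrix.PosSemidef.diagonal fun _ => sub_nonneg.2 (le_max_right _ _)
end
end
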